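/- (Theorem 2: robustness of the tracking error system.) Let N ≥ 2, α>0, λ>0, l>0, k₁,…,k_N ∈ (0,l) (indices cyclic modulo N, index 0 meaning N), and σ ∈ (0,λ). For i = 1,…,N let f^{(i)} be continuous on [0,1]×[0,∞), d₀^{(i)}, d₁^{(i)} continuous on [0,∞), q̃₀^{(i)}, ũ₀^{(i)} ∈ C([0,1]). Let q̃^{(i)} be classical solutions on [0,1]×[0,∞) of q̃_t^{(i)} = α q̃_xx^{(i)} − λ q̃^{(i)} + f^{(i)}, q̃_x^{(i)}(0,t)=0, q̃_x^{(i)}(1,t) = −l q̃^{(i)}(1,t), q̃^{(i)}(·,0)=q̃₀^{(i)}, and let ũ^{(i)} be classical solutions of ũ_t^{(i)} = α ũ_xx^{(i)} − λ ũ^{(i)} + f^{(i)}, ũ^{(i)}(0,t) = q̃^{(i)}(0,t) + d₀^{(i)}(t), ũ_x^{(i)}(1,t) = −l ũ^{(i)}(1,t) + k_i ũ^{(i−1)}(1,t) + d₁^{(i)}(t), ũ^{(i)}(·,0)=ũ₀^{(i)}. Set 𝒩 := (Π_i k_i)/l^N, 𝓜_i := 1 + Σ_{m=1}^{i}(Π_{r=0}^{m−1}k_{i−r})/l^m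 + Σ_{m=i+1}^{N−1}(Π_{r=0}^{i−1}k_{i−r})(Π_{s=0}^{m−i−1}k_{N−s})/l^m, 𝓒_i := 𝓜_i/(1−𝒩), 𝓒̃_i := 1 + (k_i/l)𝓒_{i−1}, and 𝓓(t) := (2/(λ−σ)) max_i ‖f^{(i)}‖_{C([0,1]×[0,t])} + max_i ‖d₀^{(i)}‖_{C([0,t])} + (1/l) max_i ‖d₁^{(i)}‖_{C([0,t])}. Then for every i and every t > 0, ‖ũ^{(i)}(·,t)‖_{C([0,1])} ≤ 𝓒̃_i 𝓓(t) + 𝓒̃_i e^{−σt} ( max_j ‖ũ₀^{(j)}‖_{C([0,1])} + max_j ‖q̃₀^{(j)}‖_{C([0,1])} ). -/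

import Mathlib

/-- Max-norm of a function over `[0,1]`. -/
noncomputable def supIcc01 (h : ℝ → ℝ) : ℝ := sSup ((fun x => |h x|) '' Set.Icc 0 1)

/-- Max-norm of a function of `(x,s)` over `[0,1] × [0,t]`. -/
noncomputable def supRect (F : ℝ → ℝ → ℝ) (t : ℝ) : ℝ :=
  sSup ((fun p : ℝ × ℝ => |F p.1 p.2|) '' (Set.Icc 0 1 ×ˢ Set.Icc 0 t))

/-- Max-norm of a function over `[0,t]`. -/
noncomputable def supT (g : ℝ → ℝ) (t : ℝ) : ℝ := sSup ((fun s => |g s|) '' Set.Icc 0 t)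

/-- Maximum over the agents `i = 1,…,N`. -/
noncomputable def maxAgents (N : ℕ) (g : ℤ → ℝ) : ℝ := sSup (g '' Set.Icc (1:ℤ) (N:ℤ))

/-- `𝒩 := (∏_{i=1}^N k_i)/l^N`. -/
noncomputable def calN (N : ℕ) (l : ℝ) (k : ℤ → ℝ) : ℝ :=
  (∏ i ∈ Finset.Icc (1:ℤ) (N:ℤ), k i) / l ^ N

/-- `𝓜_i`. -/
noncomputable def calM (N : ℕ) (l : ℝ) (k : ℤ → ℝ) (i : ℤ) : ℝ :=
  1 + (∑ m ∈ Finset.Icc (1:ℤ) i, (∏ r ∈ Finset.Icc (0:ℤ) (m - 1), k (i - r)) / l ^ m)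
    + (∑ m ∈ Finset.Icc (i + 1) ((N:ℤ) - 1),
        ((∏ r ∈ Finset.Icc (0:ℤ) (i - 1), k (i - r)) *
          (∏ s ∈ Finset.Icc (0:ℤ) (m - i - 1), k ((N:ℤ) - s))) / l ^ m)

/-- `𝓒_i := 𝓜_i/(1−𝒩)`. -/
noncomputable def calC (N : ℕ) (l : ℝ) (k : ℤ → ℝ) (i : ℤ) : ℝ :=
  calM N l k i / (1 - calN N l k)

/-- `𝓒̃_i := 1 + (k_i/l)𝓒_{i−1}`. -/
noncomputable def calCt (N : ℕ) (l : ℝ) (k : ℤ → ℝ) (i : ℤ) : ℝ :=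
  1 + (k i / l) * calC N l k (i - 1)

/-- `𝓓(t)`. -/
noncomputable def calD (N : ℕ) (lam σ l : ℝ) (f : ℤ → ℝ → ℝ → ℝ)
    (d₀ d₁ : ℤ → ℝ → ℝ) (t : ℝ) : ℝ :=
  (2 / (lam - σ)) * maxAgents N (fun i => supRect (f i) t) +
    maxAgents N (fun i => supT (d₀ i) t) +
    (1 / l) * maxAgents N (fun i => supT (d₁ i) t)

/-- `u` is a classical solution on `[0,1] × [0,∞)` of `u_t = a u_xx - lam u + f`. -/
structure IsParabolicSol (a lam : ℝ) (f u ux uxx ut : ℝ → ℝ → ℝ) : Prop where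
  cont_u : ContinuousOn (fun p : ℝ × ℝ => u p.1 p.2) (Set.Icc 0 1 ×ˢ Set.Ici 0)
  cont_ux : ContinuousOn (fun p : ℝ × ℝ => ux p.1 p.2) (Set.Icc 0 1 ×ˢ Set.Ioi 0)
  cont_ut : ContinuousOn (fun p : ℝ × ℝ => ut p.1 p.2) (Set.Ioo 0 1 ×ˢ Set.Ioi 0)
  cont_uxx : ContinuousOn (fun p : ℝ × ℝ => uxx p.1 p.2) (Set.Ioo 0 1 ×ˢ Set.Ioi 0)
  deriv_x : ∀ t ∈ Set.Ioi (0:ℝ), ∀ x ∈ Set.Icc (0:ℝ) 1,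
      HasDerivWithinAt (fun y => u y t) (ux x t) (Set.Icc 0 1) x
  deriv_xx : ∀ t ∈ Set.Ioi (0:ℝ), ∀ x ∈ Set.Ioo (0:ℝ) 1,
      HasDerivWithinAt (fun y => ux y t) (uxx x t) (Set.Ioo 0 1) x
  deriv_t : ∀ t ∈ Set.Ioi (0:ℝ), ∀ x ∈ Set.Ioo (0:ℝ) 1,
      HasDerivWithinAt (fun s => u x s) (ut x t) (Set.Ioi 0) t
  pde : ∀ t ∈ Set.Ioi (0:ℝ), ∀ x ∈ Set.Ioo (0:ℝ) 1,
      ut x t = a * uxx x t - lam * u x t + f x t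


open Set Filter Topology

section Helpers


lemma slope_le_of_max_left {g : ℝ → ℝ} {d : ℝ}
    (hg : HasDerivWithinAt g d (Set.Icc 0 1) 0)
    (hmax : ∀ y ∈ Set.Icc (0:ℝ) 1, g y ≤ g 0) : d ≤ 0 := by
  have h := hasDerivWithinAt_iff_tendsto_slope.1 hg
  rw [Set.Icc_diff_left] at h
  have hne : (𝓝[Set.Ioc (0:ℝ) 1] 0).NeBot := by
    refine mem_closure_iff_nhdsWithin_neBot.1 ?_
    rw [closure_Ioc (by norm_num : (0:ℝ) ≠ 1)]
    exact ⟨le_refl 0, by norm_num⟩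
  refine le_of_tendsto h (eventually_of_mem self_mem_nhdsWithin ?_)
  intro y hy
  rw [slope_def_field, div_eq_mul_inv]
  apply mul_nonpos_of_nonpos_of_nonneg
  · simp only [sub_nonpos]; exact hmax y (Set.Ioc_subset_Icc_self hy)
  · simp only [sub_zero]; exact inv_nonneg.2 (le_of_lt hy.1)


lemma slope_ge_of_max_right {g : ℝ → ℝ} {d : ℝ}
    (hg : HasDerivWithinAt g d (Set.Icc 0 1) 1)
    (hmax : ∀ y ∈ Set.Icc (0:ℝ) 1, g y ≤ g 1) : 0 ≤ d := by
  have h := hasDerivWithinAt_iff_tendsto_slope.1 hg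
  rw [Set.Icc_sdiff_right] at h
  have hne : (𝓝[Set.Ico (0:ℝ) 1] 1).NeBot := by
    refine mem_closure_iff_nhdsWithin_neBot.1 ?_
    rw [closure_Ico (by norm_num : (0:ℝ) ≠ 1)]
    exact ⟨by norm_num, le_refl 1⟩
  refine ge_of_tendsto h (eventually_of_mem self_mem_nhdsWithin ?_)
  intro y hy
  rw [slope_def_field]
  have h1 : g y - g 1 ≤ 0 := by simp only [sub_nonpos]; exact hmax y (Set.Ico_subset_Icc_self hy)
  have h2 : y - 1 ≤ 0 := by linarith [hy.2]
  exact div_nonneg_iff.mpr (Or.inr ⟨h1, h2⟩)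

lemma time_deriv_ge {g : ℝ → ℝ} {d s₀ ε : ℝ} (hs₀ : 0 < s₀)
    (hg : HasDerivAt g d s₀)
    (h : ∀ r ∈ Set.Ioo (0:ℝ) s₀, g r ≤ g s₀ + ε * (r - s₀)) : ε ≤ d := by
  have htend := hasDerivAt_iff_tendsto_slope.1 hg
  have hsub : Set.Ioo (0:ℝ) s₀ ⊆ {s₀}ᶜ := fun y hy => ne_of_lt hy.2
  have h2 : Filter.Tendsto (slope g s₀) (𝓝[Set.Ioo (0:ℝ) s₀] s₀) (𝓝 d) :=
    htend.mono_left (nhdsWithin_mono _ hsub)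
  have hne : (𝓝[Set.Ioo (0:ℝ) s₀] s₀).NeBot := by
    refine mem_closure_iff_nhdsWithin_neBot.1 ?_
    rw [closure_Ioo (ne_of_lt hs₀)]
    exact ⟨hs₀.le, le_refl s₀⟩
  refine ge_of_tendsto h2 (eventually_of_mem self_mem_nhdsWithin ?_)
  intro r hr
  rw [slope_def_field]
  rw [le_div_iff_of_neg (by linarith [hr.2] : r - s₀ < 0)]
  have := h r hr
  linarith

lemma interior_max_deriv2_nonpos {g gx : ℝ → ℝ} {x₀ d : ℝ} (hx₀ : x₀ ∈ Set.Ioo (0:ℝ) 1)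
    (hgc : ContinuousOn g (Set.Icc 0 1))
    (hgx : ∀ x ∈ Set.Icc (0:ℝ) 1, HasDerivWithinAt g (gx x) (Set.Icc 0 1) x)
    (hgxx : HasDerivWithinAt gx d (Set.Ioo 0 1) x₀)
    (hmax : ∀ y ∈ Set.Icc (0:ℝ) 1, g y ≤ g x₀) : d ≤ 0 := by
  by_contra hd
  push_neg at hd
  have hmemIcc : Set.Icc (0:ℝ) 1 ∈ 𝓝 x₀ := Icc_mem_nhds hx₀.1 hx₀.2
  have hda : HasDerivAt g (gx x₀) x₀ :=
    (hgx x₀ (Set.Ioo_subset_Icc_self hx₀)).hasDerivAt hmemIcc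
  have hloc : IsLocalMax g x₀ := by
    filter_upwards [hmemIcc] with y hy using hmax y hy
  have hgx0 : gx x₀ = 0 := hloc.hasDerivAt_eq_zero hda
  -- slope of gx tends to d > 0 from the right
  have htend := hasDerivWithinAt_iff_tendsto_slope.1 hgxx
  have hsub : Set.Ioo x₀ 1 ⊆ Set.Ioo (0:ℝ) 1 \ {x₀} := by
    intro y hy
    exact ⟨⟨lt_trans hx₀.1 hy.1, hy.2⟩, ne_of_gt hy.1⟩
  have h2 : Filter.Tendsto (slope gx x₀) (𝓝[Set.Ioo x₀ 1] x₀) (𝓝 d) :=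
    htend.mono_left (nhdsWithin_mono _ hsub)
  have hev : ∀ᶠ y in 𝓝[Set.Ioo x₀ 1] x₀, 0 < slope gx x₀ y :=
    h2.eventually (eventually_gt_nhds hd)
  have hev2 : ∀ᶠ y in 𝓝[Set.Ioo x₀ 1] x₀, 0 < gx y := by
    filter_upwards [hev, self_mem_nhdsWithin] with y hy hymem
    rw [slope_def_field, hgx0, sub_zero] at hy
    have hy' : 0 < y - x₀ := by linarith [hymem.1]
    have := mul_pos hy hy'
    rw [div_mul_cancel₀] at this
    · exact this
    · exact ne_of_gt hy'
  rw [eventually_nhdsWithin_iff] at hev2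
  rcases Metric.eventually_nhds_iff_ball.1 hev2 with ⟨r, hr, hball⟩
  set b := min (x₀ + r) 1 with hb
  have hx₀b : x₀ < b := lt_min (by linarith) hx₀.2
  have hbsub : Set.Ioo x₀ b ⊆ {y | 0 < gx y} := by
    intro y hy
    apply hball
    · rw [Metric.mem_ball, Real.dist_eq, abs_of_pos (by linarith [hy.1])]
      have := hy.2
      have : y < x₀ + r := lt_of_lt_of_le this (min_le_left _ _)
      linarith
    · exact ⟨hy.1, lt_of_lt_of_le hy.2 (min_le_right _ _)⟩
  -- g is strictly monotone on [x₀, b]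
  have hmono : StrictMonoOn g (Set.Icc x₀ b) := by
    apply strictMonoOn_of_deriv_pos (convex_Icc _ _)
    · exact hgc.mono (Set.Icc_subset_Icc hx₀.1.le (min_le_right _ _))
    · intro y hy
      rw [interior_Icc] at hy
      have hyI : y ∈ Set.Ioo (0:ℝ) 1 := ⟨lt_trans hx₀.1 hy.1, lt_of_lt_of_le hy.2 (min_le_right _ _)⟩
      have : HasDerivAt g (gx y) y :=
        (hgx y (Set.Ioo_subset_Icc_self hyI)).hasDerivAt (Icc_mem_nhds hyI.1 hyI.2)
      rw [this.deriv]
      exact hbsub hy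
  have hmid : (x₀ + b) / 2 ∈ Set.Icc x₀ b := ⟨by linarith, by linarith⟩
  have h1 : g x₀ < g ((x₀ + b) / 2) :=
    hmono (Set.left_mem_Icc.2 (le_of_lt hx₀b)) hmid (by linarith)
  have h2' : g ((x₀ + b) / 2) ≤ g x₀ := by
    apply hmax
    constructor
    · linarith [hx₀.1]
    · have : b ≤ 1 := min_le_right _ _
      linarith [hx₀.2]
  linarith
/-- Parabolic maximum principle on `[0,1] × [0,t]` with Robin condition at `x = 1`
and either Neumann or a Dirichlet bound at `x = 0`. -/
lemma max_principle {a μ l t : ℝ} (ha : 0 < a) (hμ : 0 < μ) (hl : 0 < l) (ht : 0 < t)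
    (v vx vxx vt : ℝ → ℝ → ℝ) (K : ℝ)
    (hv : ContinuousOn (fun p : ℝ × ℝ => v p.1 p.2) (Set.Icc 0 1 ×ˢ Set.Icc 0 t))
    (hdx : ∀ s ∈ Set.Ioc (0:ℝ) t, ∀ x ∈ Set.Icc (0:ℝ) 1,
        HasDerivWithinAt (fun y => v y s) (vx x s) (Set.Icc 0 1) x)
    (hdxx : ∀ s ∈ Set.Ioc (0:ℝ) t, ∀ x ∈ Set.Ioo (0:ℝ) 1,
        HasDerivWithinAt (fun y => vx y s) (vxx x s) (Set.Ioo 0 1) x)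
    (hdt : ∀ s ∈ Set.Ioc (0:ℝ) t, ∀ x ∈ Set.Ioo (0:ℝ) 1,
        HasDerivWithinAt (fun r => v x r) (vt x s) (Set.Ioi 0) s)
    (hpde : ∀ s ∈ Set.Ioc (0:ℝ) t, ∀ x ∈ Set.Ioo (0:ℝ) 1,
        vt x s ≤ a * vxx x s - μ * v x s + μ * K)
    (hic : ∀ x ∈ Set.Icc (0:ℝ) 1, v x 0 ≤ K)
    (hbc0 : ∀ s ∈ Set.Ioc (0:ℝ) t, vx 0 s = 0 ∨ v 0 s ≤ K)
    (hbc1 : ∀ s ∈ Set.Ioc (0:ℝ) t, vx 1 s ≤ -l * v 1 s + l * K) :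
    ∀ x ∈ Set.Icc (0:ℝ) 1, ∀ s ∈ Set.Icc (0:ℝ) t, v x s ≤ K := by
  intro x hx s hs
  refine le_of_forall_pos_le_add ?_
  intro c hc
  set ε := c / (2 * t) with hε
  set δ := c * l / (2 * (l + 1)) with hδ
  have hεpos : 0 < ε := by rw [hε]; positivity
  have hδpos : 0 < δ := by rw [hδ]; positivity
  have hεt : ε * t = c / 2 := by rw [hε]; field_simp
  have hδl : δ + δ / l = c / 2 := by rw [hδ]; field_simp
  clear_value ε δ
  -- the perturbed function
  set w : ℝ × ℝ → ℝ := fun p => v p.1 p.2 - ε * p.2 + δ * p.1 with hw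
  set R : Set (ℝ × ℝ) := Set.Icc 0 1 ×ˢ Set.Icc 0 t with hR
  have hRc : IsCompact R := (isCompact_Icc).prod isCompact_Icc
  have hRne : R.Nonempty := ⟨(0, 0), by
    constructor <;> constructor <;> norm_num [ht.le]⟩
  have hwc : ContinuousOn w R := by
    apply ContinuousOn.add
    · exact hv.sub (continuous_snd.continuousOn.const_smul ε)
    · exact (continuous_fst.continuousOn.const_smul δ)
  obtain ⟨p₀, hp₀R, hp₀max⟩ := hRc.exists_isMaxOn hRne hwc
  have hmaxpt : ∀ p ∈ R, w p ≤ w p₀ := fun p hp => hp₀max hp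
  obtain ⟨x₀, s₀⟩ := p₀
  have hx₀ : x₀ ∈ Set.Icc (0:ℝ) 1 := hp₀R.1
  have hs₀ : s₀ ∈ Set.Icc (0:ℝ) t := hp₀R.2
  -- the key bound on the maximum of w
  have hwmax : w (x₀, s₀) ≤ K + δ + δ / l := by
    rcases eq_or_lt_of_le hs₀.1 with hs0 | hs0
    · -- s₀ = 0
      have : w (x₀, s₀) = v x₀ 0 + δ * x₀ := by
        rw [hw]; simp [← hs0]
      rw [this]
      have h1 := hic x₀ hx₀
      have h2 : δ * x₀ ≤ δ := by nlinarith [hx₀.2, hx₀.1]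
      have : 0 < δ / l := div_pos hδpos hl
      linarith
    · -- s₀ > 0
      have hs₀' : s₀ ∈ Set.Ioc (0:ℝ) t := ⟨hs0, hs₀.2⟩
      -- max along x at time s₀
      have hxmax : ∀ y ∈ Set.Icc (0:ℝ) 1, v y s₀ + δ * y ≤ v x₀ s₀ + δ * x₀ := by
        intro y hy
        have := hmaxpt (y, s₀) ⟨hy, hs₀⟩
        simp only [hw] at this ⊢
        linarith
      rcases eq_or_lt_of_le hx₀.1 with hx0 | hx0
      · -- x₀ = 0
        have hg : HasDerivWithinAt (fun y => v y s₀ + δ * y) (vx 0 s₀ + δ) (Set.Icc 0 1) 0 := by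
          have := (hdx s₀ hs₀' 0 (Set.left_mem_Icc.2 zero_le_one))
          simpa using this.fun_add ((hasDerivWithinAt_id (0:ℝ) _).const_mul δ)
        have hd0 : vx 0 s₀ + δ ≤ 0 := by
          apply slope_le_of_max_left hg
          intro y hy
          have h0 := hxmax y hy
          rw [← hx0] at h0
          simpa using h0
        rcases hbc0 s₀ hs₀' with hneu | hdir
        · rw [hneu] at hd0; linarith
        · have : w (x₀, s₀) = v 0 s₀ - ε * s₀ + δ * 0 := by rw [hw, ← hx0]
          rw [this]
          have : 0 ≤ ε * s₀ := mul_nonneg hεpos.le hs0.le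
          have h3 : 0 < δ / l := div_pos hδpos hl
          linarith
      · rcases eq_or_lt_of_le hx₀.2 with hx1 | hx1
        · -- x₀ = 1
          have hg : HasDerivWithinAt (fun y => v y s₀ + δ * y) (vx 1 s₀ + δ) (Set.Icc 0 1) 1 := by
            have := (hdx s₀ hs₀' 1 (Set.right_mem_Icc.2 zero_le_one))
            simpa using this.fun_add ((hasDerivWithinAt_id (1:ℝ) _).const_mul δ)
          have hd1 : 0 ≤ vx 1 s₀ + δ := by
            apply slope_ge_of_max_right hg
            intro y hy
            rw [hx1] at hxmax
            simpa using hxmax y hy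
          have hrb := hbc1 s₀ hs₀'
          have hv1 : v 1 s₀ ≤ K + δ / l := by
            have h5 : -δ ≤ -l * v 1 s₀ + l * K := by linarith
            have h6 : l * v 1 s₀ ≤ l * (K + δ / l) := by
              rw [mul_add, mul_div_cancel₀ _ hl.ne']
              linarith
            exact le_of_mul_le_mul_left h6 hl
          have : w (x₀, s₀) = v 1 s₀ - ε * s₀ + δ * 1 := by rw [hw, hx1]
          rw [this]
          have : 0 ≤ ε * s₀ := mul_nonneg hεpos.le hs0.le
          linarith
        · -- interior
          have hx₀I : x₀ ∈ Set.Ioo (0:ℝ) 1 := ⟨hx0, hx1⟩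
          -- second derivative nonpositive
          have hvxx : vxx x₀ s₀ ≤ 0 := by
            apply interior_max_deriv2_nonpos (g := fun y => v y s₀ + δ * y)
              (gx := fun y => vx y s₀ + δ) hx₀I
            · apply ContinuousOn.add
              · exact hv.comp ((continuous_id.prodMk continuous_const).continuousOn)
                  (fun y hy => Set.mk_mem_prod hy hs₀)
              · exact (continuous_id.continuousOn.const_smul δ)
            · intro y hy
              simpa using (hdx s₀ hs₀' y hy).fun_add ((hasDerivWithinAt_id y _).const_mul δ)
            · simpa using (hdxx s₀ hs₀' x₀ hx₀I).add_const δ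
            · exact hxmax
          -- time derivative at least ε
          have hvt : ε ≤ vt x₀ s₀ := by
            apply time_deriv_ge hs0 ((hdt s₀ hs₀' x₀ hx₀I).hasDerivAt
              (Ioi_mem_nhds hs0))
            intro r hr
            have := hmaxpt (x₀, r) ⟨hx₀, ⟨hr.1.le, le_trans hr.2.le hs₀.2⟩⟩
            simp only [hw] at this
            linarith
          have hp := hpde s₀ hs₀' x₀ hx₀I
          have havxx : a * vxx x₀ s₀ ≤ 0 := mul_nonpos_of_nonneg_of_nonpos ha.le hvxx
          have hvbd : v x₀ s₀ ≤ K := by nlinarith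
          have : w (x₀, s₀) = v x₀ s₀ - ε * s₀ + δ * x₀ := rfl
          rw [this]
          have h2 : δ * x₀ ≤ δ := by nlinarith [hx₀.2]
          have : 0 ≤ ε * s₀ := mul_nonneg hεpos.le hs0.le
          have h3 : 0 < δ / l := div_pos hδpos hl
          linarith
  -- conclude
  have hxs' : v x s - ε * s + δ * x ≤ K + δ + δ / l := by
    have h7 := (hmaxpt (x, s) ⟨hx, hs⟩).trans hwmax
    simpa [hw] using h7
  have hδx : 0 ≤ δ * x := mul_nonneg hδpos.le hx.1
  have hεs : ε * s ≤ ε * t := by nlinarith [hs.2]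
  linarith
/-- Weighted estimate for a single parabolic solution. -/
lemma parabolic_estimate {a lam σ l t : ℝ} (ha : 0 < a) (hσ : 0 < σ) (hsl : σ < lam)
    (hl : 0 < l) (ht : 0 < t)
    {f u ux uxx ut' : ℝ → ℝ → ℝ} (sol : IsParabolicSol a lam f u ux uxx ut')
    (K F : ℝ)
    (hF : ∀ x ∈ Set.Icc (0:ℝ) 1, ∀ s ∈ Set.Icc (0:ℝ) t, |f x s| ≤ F)
    (hK : Real.exp (σ * t) * F ≤ (lam - σ) * K)
    (hic : ∀ x ∈ Set.Icc (0:ℝ) 1, |u x 0| ≤ K)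
    (hbc0 : ∀ s ∈ Set.Ioc (0:ℝ) t, ux 0 s = 0 ∨ Real.exp (σ * s) * |u 0 s| ≤ K)
    (hbc1 : ∀ s ∈ Set.Ioc (0:ℝ) t, Real.exp (σ * s) * |ux 1 s + l * u 1 s| ≤ l * K) :
    ∀ x ∈ Set.Icc (0:ℝ) 1, ∀ s ∈ Set.Icc (0:ℝ) t, Real.exp (σ * s) * |u x s| ≤ K := by
  have hμ : 0 < lam - σ := by linarith
  have key : ∀ c : ℝ, c = 1 ∨ c = -1 →
      ∀ x ∈ Set.Icc (0:ℝ) 1, ∀ s ∈ Set.Icc (0:ℝ) t,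
        c * (Real.exp (σ * s) * u x s) ≤ K := by
    intro c hc
    have hc1 : |c| = 1 := by rcases hc with h | h <;> simp [h]
    apply max_principle ha hμ hl ht
      (fun x s => c * (Real.exp (σ * s) * u x s))
      (fun x s => c * (Real.exp (σ * s) * ux x s))
      (fun x s => c * (Real.exp (σ * s) * uxx x s))
      (fun x s => c * (Real.exp (σ * s) * (σ * u x s + ut' x s))) K
    -- continuity
    · have hsub : Set.Icc (0:ℝ) 1 ×ˢ Set.Icc (0:ℝ) t ⊆ Set.Icc (0:ℝ) 1 ×ˢ Set.Ici (0:ℝ) :=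
        Set.prod_mono subset_rfl Set.Icc_subset_Ici_self
      exact ((Real.continuous_exp.comp (continuous_const.mul continuous_snd)).continuousOn.mul
        (sol.cont_u.mono hsub)).const_smul c
    -- x-derivative
    · intro s hs x hx
      exact ((sol.deriv_x s hs.1 x hx).const_mul (Real.exp (σ * s))).const_mul c
    -- xx-derivative
    · intro s hs x hx
      exact ((sol.deriv_xx s hs.1 x hx).const_mul (Real.exp (σ * s))).const_mul c
    -- t-derivative
    · intro s hs x hx
      have h1 : HasDerivAt (fun r : ℝ => Real.exp (σ * r)) (Real.exp (σ * s) * σ) s := by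
        simpa using ((hasDerivAt_id s).const_mul σ).exp
      have h2 := (h1.hasDerivWithinAt.fun_mul (sol.deriv_t s hs.1 x hx)).const_mul c
      refine h2.congr_deriv ?_
      ring
    -- pde
    · intro s hs x hx
      have hp := sol.pde s hs.1 x hx
      have hfb : c * (Real.exp (σ * s) * f x s) ≤ (lam - σ) * K := by
        have h3 : c * (Real.exp (σ * s) * f x s) ≤ |c * (Real.exp (σ * s) * f x s)| :=
          le_abs_self _
        rw [abs_mul, abs_mul, hc1, one_mul, abs_of_pos (Real.exp_pos _)] at h3
        have h4 : Real.exp (σ * s) * |f x s| ≤ Real.exp (σ * t) * F := by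
          apply mul_le_mul (Real.exp_le_exp.2 (by nlinarith [hs.2]))
            (hF x (Set.Ioo_subset_Icc_self hx) s ⟨hs.1.le, hs.2⟩) (abs_nonneg _) (Real.exp_pos _).le
        linarith
      rw [hp]
      ring_nf
      nlinarith [Real.exp_pos (σ * s), hfb]
    -- initial condition
    · intro x hx
      have h0 := hic x hx
      have he : c * (Real.exp (σ * 0) * u x 0) = c * u x 0 := by simp
      rw [he]
      calc c * u x 0 ≤ |c * u x 0| := le_abs_self _
      _ = |u x 0| := by rw [abs_mul, hc1, one_mul]
      _ ≤ K := h0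
    -- boundary at 0
    · intro s hs
      rcases hbc0 s hs with h | h
      · left; rw [h]; ring
      · right
        calc c * (Real.exp (σ * s) * u 0 s) ≤ |c * (Real.exp (σ * s) * u 0 s)| := le_abs_self _
        _ = Real.exp (σ * s) * |u 0 s| := by
            rw [abs_mul, abs_mul, hc1, one_mul, abs_of_pos (Real.exp_pos _)]
        _ ≤ K := h
    -- boundary at 1
    · intro s hs
      have h := hbc1 s hs
      have h6 : c * (Real.exp (σ * s) * (ux 1 s + l * u 1 s)) ≤ l * K := by
        calc c * (Real.exp (σ * s) * (ux 1 s + l * u 1 s))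
            ≤ |c * (Real.exp (σ * s) * (ux 1 s + l * u 1 s))| := le_abs_self _
        _ = Real.exp (σ * s) * |ux 1 s + l * u 1 s| := by
            rw [abs_mul, abs_mul, hc1, one_mul, abs_of_pos (Real.exp_pos _)]
        _ ≤ l * K := h
      have : c * (Real.exp (σ * s) * ux 1 s) =
          c * (Real.exp (σ * s) * (ux 1 s + l * u 1 s)) - l * (c * (Real.exp (σ * s) * u 1 s)) := by
        ring
      rw [this]
      linarith
  intro x hx s hs
  have h1 := key 1 (Or.inl rfl) x hx s hs
  have h2 := key (-1) (Or.inr rfl) x hx s hs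
  rw [← abs_of_pos (Real.exp_pos (σ * s)), ← abs_mul]
  apply abs_le.2
  constructor
  · simp only [neg_mul, one_mul] at h2 ⊢
    linarith
  · linarith [h1]




lemma per_mul {g : ℤ → ℝ} {N : ℕ} (h : ∀ i, g (i + N) = g i) :
    ∀ (q j : ℤ), g (j + q * N) = g j := by
  intro q
  induction q using Int.induction_on with
  | zero => simp
  | succ n ih =>
      intro j
      have e : j + (n + 1) * N = (j + n * N) + N := by ring
      rw [e, h, ih]
  | pred n ih =>
      intro j
      have e : j + (-n - 1) * N = (j + (-n) * N) - N := by ring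
      rw [e]
      have h2 : g ((j + (-n) * N) - N) = g (j + (-n) * N) := by
        have h3 := h ((j + (-n) * N) - N)
        simpa using h3.symm
      rw [h2, ih]

lemma exists_rep {g : ℤ → ℝ} {N : ℕ} (hN : 1 ≤ N) (h : ∀ i, g (i + N) = g i) (j : ℤ) :
    ∃ r, r ∈ Set.Icc (1:ℤ) (N:ℤ) ∧ g j = g r := by
  have hN0 : (0:ℤ) < N := by exact_mod_cast hN
  set r := (j - 1) % N + 1 with hr
  set q := (j - 1) / N with hq
  have hj : j = r + q * N := by
    have h0 := Int.mul_ediv_add_emod (j - 1) N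
    have h1 : (N:ℤ) * ((j-1)/N) = ((j-1)/N) * N := mul_comm _ _
    linarith [hq, hr]
  refine ⟨r, ⟨by have := Int.emod_nonneg (j - 1) hN0.ne'; omega,
    by have := Int.emod_lt_of_pos (j - 1) hN0; omega⟩, ?_⟩
  have h4 := per_mul h q r
  rw [← hj] at h4
  exact h4

lemma le_maxAgents {g : ℤ → ℝ} {N : ℕ} (hN : 1 ≤ N) (h : ∀ i, g (i + N) = g i) (j : ℤ) :
    g j ≤ maxAgents N g := by
  obtain ⟨r, hr, hgr⟩ := exists_rep hN h j
  rw [hgr]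
  exact le_csSup ((Set.finite_Icc _ _).image g).bddAbove ⟨r, hr, rfl⟩

lemma prod_Icc_int (g : ℤ → ℝ) (a : ℤ) (n : ℕ) :
    ∏ m ∈ Finset.Icc a (a + n - 1), g m = ∏ r ∈ Finset.range n, g (a + r) := by
  induction n with
  | zero => rw [Finset.Icc_eq_empty (by omega)]; simp
  | succ n ih =>
      have e : a + (n + 1 : ℕ) - 1 = a + n := by push_cast; ring
      have hins : Finset.Icc a (a + (n:ℤ)) = insert (a + n) (Finset.Icc a (a + n - 1)) := by
        ext m
        simp only [Finset.mem_Icc, Finset.mem_insert]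
        omega
      have hnot : (a + (n:ℤ)) ∉ Finset.Icc a (a + n - 1) := by
        simp only [Finset.mem_Icc]
        omega
      rw [e, hins, Finset.prod_insert hnot, ih, Finset.prod_range_succ, mul_comm]

lemma prod_window {k : ℤ → ℝ} {N : ℕ} (hN : 1 ≤ N) (hper : ∀ i, k (i + N) = k i) (j : ℤ) :
    (∏ r ∈ Finset.range N, k (j - r)) = ∏ i ∈ Finset.Icc (1:ℤ) (N:ℤ), k i := by
  have shift : ∀ j : ℤ, (∏ r ∈ Finset.range N, k ((j + 1) - r)) = ∏ r ∈ Finset.range N, k (j - r) := by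
    intro j
    obtain ⟨n, rfl⟩ : ∃ n, N = n + 1 := ⟨N - 1, by omega⟩
    rw [Finset.prod_range_succ', Finset.prod_range_succ]
    congr 1
    · apply Finset.prod_congr rfl
      intro x _
      congr 1
      push_cast
      ring
    · have e : (j:ℤ) + 1 - (0:ℕ) = (j - n) + ((n:ℤ) + 1) := by push_cast; ring
      rw [e]
      have := hper (j - n)
      push_cast at this ⊢
      rw [← add_assoc] at this ⊢
      exact this
  have inv : ∀ j : ℤ, (∏ r ∈ Finset.range N, k (j - r)) = ∏ r ∈ Finset.range N, k ((0:ℤ) - r) := by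
    intro j
    induction j using Int.induction_on with
    | zero => rfl
    | succ n ih => rw [show ((n:ℤ) + 1) = n + 1 from rfl, shift n, ih]
    | pred n ih =>
        have h5 := shift (-(n:ℤ) - 1)
        rw [show (-(n:ℤ) - 1 + 1) = -(n:ℤ) from by ring] at h5
        rw [← h5]
        exact ih
  rw [inv j, ← inv (N:ℤ)]
  -- now reindex: ∏_{r<N} k(N - r) = ∏_{i ∈ Icc 1 N} k i
  have h1 : ∏ i ∈ Finset.Icc (1:ℤ) (N:ℤ), k i = ∏ r ∈ Finset.range N, k (1 + r) := by
    have := prod_Icc_int k 1 N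
    rw [show (1:ℤ) + N - 1 = N from by ring] at this
    exact this
  have h2 : ∀ r ∈ Finset.range N, k ((N:ℤ) - r) = k (1 + ((N - 1 - r : ℕ) : ℤ)) := by
    intro r hr
    rw [Finset.mem_range] at hr
    congr 1
    omega
  rw [Finset.prod_congr rfl h2, Finset.prod_range_reflect (fun r => k (1 + r)) N, h1]









lemma sum_Icc_int (g : ℤ → ℝ) (a : ℤ) (n : ℕ) :
    ∑ m ∈ Finset.Icc a (a + n - 1), g m = ∑ r ∈ Finset.range n, g (a + r) := by
  induction n with
  | zero => rw [Finset.Icc_eq_empty (by omega)]; simp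
  | succ n ih =>
      have e : a + (n + 1 : ℕ) - 1 = a + n := by push_cast; ring
      have hins : Finset.Icc a (a + (n:ℤ)) = insert (a + n) (Finset.Icc a (a + n - 1)) := by
        ext m
        simp only [Finset.mem_Icc, Finset.mem_insert]
        omega
      have hnot : (a + (n:ℤ)) ∉ Finset.Icc a (a + n - 1) := by
        simp only [Finset.mem_Icc]
        omega
      rw [e, hins, Finset.sum_insert hnot, ih, Finset.sum_range_succ, add_comm]

/-- `𝓜_j` equals the plain unrolled sum `∑_{m<N} (∏_{r<m} k_{j-r})/l^m` for `0 ≤ j ≤ N-1`. -/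
lemma calM_eq {N : ℕ} (hN : 1 ≤ N) {l : ℝ} (hl : 0 < l) {k : ℤ → ℝ}
    (hper : ∀ i, k (i + N) = k i) (jn : ℕ) (hj : jn < N) :
    calM N l k (jn : ℤ) =
      ∑ m ∈ Finset.range N, (∏ r ∈ Finset.range m, k ((jn : ℤ) - r)) / l ^ m := by
  have hsplit : ∑ m ∈ Finset.range N, (∏ r ∈ Finset.range m, k ((jn : ℤ) - r)) / l ^ m =
      (∑ m ∈ Finset.range (jn + 1), (∏ r ∈ Finset.range m, k ((jn : ℤ) - r)) / l ^ m) +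
      ∑ m ∈ Finset.Ico (jn + 1) N, (∏ r ∈ Finset.range m, k ((jn : ℤ) - r)) / l ^ m :=
    (Finset.sum_range_add_sum_Ico _ hj).symm
  rw [hsplit]
  have hB : ∑ m ∈ Finset.range (jn + 1), (∏ r ∈ Finset.range m, k ((jn : ℤ) - r)) / l ^ m =
      (∑ m ∈ Finset.range jn, (∏ r ∈ Finset.range (m+1), k ((jn : ℤ) - r)) / l ^ (m+1)) + 1 := by
    rw [Finset.sum_range_succ']
    simp
  have hA : ∑ m ∈ Finset.Icc (1:ℤ) (jn : ℤ),
        (∏ r ∈ Finset.Icc (0:ℤ) (m - 1), k ((jn:ℤ) - r)) / l ^ m =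
      ∑ m ∈ Finset.range jn, (∏ r ∈ Finset.range (m+1), k ((jn : ℤ) - r)) / l ^ (m+1) := by
    have e := sum_Icc_int (fun m => (∏ r ∈ Finset.Icc (0:ℤ) (m - 1), k ((jn:ℤ) - r)) / l ^ m) 1 jn
    rw [show (1:ℤ) + jn - 1 = (jn:ℤ) from by ring] at e
    rw [e]
    apply Finset.sum_congr rfl
    intro m _
    have e2 := prod_Icc_int (fun r => k ((jn:ℤ) - r)) 0 (m + 1)
    rw [show (0:ℤ) + (m + 1 : ℕ) - 1 = 1 + (m:ℤ) - 1 from by push_cast; ring] at e2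
    simp only [zero_add] at e2
    rw [e2]
    have e3 : l ^ ((1:ℤ) + m) = l ^ (m + 1 : ℕ) := by
      rw [show (1:ℤ) + m = ((m + 1 : ℕ) : ℤ) from by push_cast; ring, zpow_natCast]
    rw [e3]
  have h2 : ∑ m ∈ Finset.Icc ((jn:ℤ) + 1) ((N:ℤ) - 1),
        ((∏ r ∈ Finset.Icc (0:ℤ) ((jn:ℤ) - 1), k ((jn:ℤ) - r)) *
          (∏ s ∈ Finset.Icc (0:ℤ) (m - (jn:ℤ) - 1), k ((N:ℤ) - s))) / l ^ m =
      ∑ m ∈ Finset.Ico (jn + 1) N, (∏ r ∈ Finset.range m, k ((jn : ℤ) - r)) / l ^ m := by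
    rw [Finset.sum_Ico_eq_sum_range]
    have e := sum_Icc_int (fun m =>
      ((∏ r ∈ Finset.Icc (0:ℤ) ((jn:ℤ) - 1), k ((jn:ℤ) - r)) *
        (∏ s ∈ Finset.Icc (0:ℤ) (m - (jn:ℤ) - 1), k ((N:ℤ) - s))) / l ^ m) ((jn:ℤ) + 1) (N - (jn+1))
    rw [show (jn:ℤ) + 1 + ((N - (jn+1) : ℕ) : ℤ) - 1 = (N:ℤ) - 1 from by
      push_cast [Nat.cast_sub (by omega : jn + 1 ≤ N)]; ring] at e
    rw [e]
    apply Finset.sum_congr rfl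
    intro m _
    have hprodsplit : ∏ r ∈ Finset.range (jn + 1 + m), k ((jn:ℤ) - r) =
        (∏ r ∈ Finset.range jn, k ((jn:ℤ) - r)) * ∏ s ∈ Finset.range (m + 1), k ((N:ℤ) - s) := by
      rw [show jn + 1 + m = jn + (m + 1) from by omega, Finset.prod_range_add]
      congr 1
      apply Finset.prod_congr rfl
      intro s _
      have e4 : (jn:ℤ) - (jn + s : ℕ) = -(s:ℤ) := by push_cast; ring
      rw [e4, show (N:ℤ) - s = -(s:ℤ) + N from by ring, hper]
    have hfirst : ∏ r ∈ Finset.Icc (0:ℤ) ((jn:ℤ) - 1), k ((jn:ℤ) - r) =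
        ∏ r ∈ Finset.range jn, k ((jn:ℤ) - r) := by
      have e2 := prod_Icc_int (fun r => k ((jn:ℤ) - r)) 0 jn
      rw [show (0:ℤ) + jn - 1 = (jn:ℤ) - 1 from by ring] at e2
      simpa only [zero_add] using e2
    have hsecond : ∏ s ∈ Finset.Icc (0:ℤ) ((jn:ℤ) + 1 + m - (jn:ℤ) - 1), k ((N:ℤ) - s) =
        ∏ s ∈ Finset.range (m + 1), k ((N:ℤ) - s) := by
      have e2 := prod_Icc_int (fun s => k ((N:ℤ) - s)) 0 (m + 1)
      rw [show (0:ℤ) + (m + 1 : ℕ) - 1 = (jn:ℤ) + 1 + m - (jn:ℤ) - 1 from by push_cast; ring] at e2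
      simpa only [zero_add] using e2
    have e3 : l ^ ((jn:ℤ) + 1 + m) = l ^ (jn + 1 + m : ℕ) := by
      rw [show (jn:ℤ) + 1 + m = ((jn + 1 + m : ℕ) : ℤ) from by push_cast; ring, zpow_natCast]
    rw [hfirst, hsecond, ← hprodsplit, e3]
  rw [calM, hB, hA, ← h2]
  ring

lemma calN_pos {N : ℕ} (hN : 1 ≤ N) {l : ℝ} (hl : 0 < l) {k : ℤ → ℝ}
    (hk : ∀ i, k i ∈ Set.Ioo 0 l) : 0 < calN N l k := by
  apply div_pos (Finset.prod_pos (fun i _ => (hk i).1)) (pow_pos hl N)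

lemma calN_lt_one {N : ℕ} (hN : 1 ≤ N) {l : ℝ} (hl : 0 < l) {k : ℤ → ℝ}
    (hk : ∀ i, k i ∈ Set.Ioo 0 l) : calN N l k < 1 := by
  rw [calN, div_lt_one (pow_pos hl N)]
  have hcard : (Finset.Icc (1:ℤ) (N:ℤ)).card = N := by
    rw [Int.card_Icc]
    omega
  calc ∏ i ∈ Finset.Icc (1:ℤ) (N:ℤ), k i < ∏ _i ∈ Finset.Icc (1:ℤ) (N:ℤ), l := by
        apply Finset.prod_lt_prod_of_nonempty (fun i _ => (hk i).1) (fun i _ => (hk i).2)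
        rw [Finset.nonempty_Icc]
        exact_mod_cast hN
  _ = l ^ N := by rw [Finset.prod_const, hcard]

lemma unroll {N : ℕ} (hN : 1 ≤ N) {l : ℝ} (hl : 0 < l) {k : ℤ → ℝ}
    (hper : ∀ i, k (i + N) = k i) (hk : ∀ i, k i ∈ Set.Ioo 0 l)
    {W : ℤ → ℝ} {E : ℝ} (hE : 0 ≤ E) (hW : ∀ j, 0 ≤ W j)
    (hWper : ∀ j, W (j + N) = W j)
    (step : ∀ j, W j ≤ E + (k j / l) * W (j - 1)) :
    ∀ (jn : ℕ), jn < N → W (jn : ℤ) ≤ calC N l k (jn : ℤ) * E := by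
  have hkpos : ∀ i, 0 < k i := fun i => (hk i).1
  set T : ℕ → ℤ → ℝ := fun n j => (∏ r ∈ Finset.range n, k (j - r)) / l ^ n with hT
  have hTpos : ∀ n j, 0 < T n j :=
    fun n j => div_pos (Finset.prod_pos (fun i _ => hkpos _)) (pow_pos hl n)
  have claim : ∀ (n : ℕ) (j : ℤ),
      W j ≤ E * (∑ m ∈ Finset.range n, T m j) + T n j * W (j - n) := by
    intro n
    induction n with
    | zero => intro j; simp [hT]
    | succ n ih =>
        intro j
        have h1 := ih j
        have h2 := step (j - n)
        have h3 : T n j * W (j - n) ≤ T n j * (E + (k (j - n) / l) * W (j - n - 1)) :=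
          mul_le_mul_of_nonneg_left h2 (hTpos n j).le
        have h4 : T n j * (k (j - n) / l) = T (n + 1) j := by
          rw [hT]
          simp only
          rw [div_mul_div_comm, Finset.prod_range_succ, pow_succ]
        have h5 : j - n - 1 = j - ((n + 1 : ℕ) : ℤ) := by push_cast; ring
        calc W j ≤ E * (∑ m ∈ Finset.range n, T m j) + T n j * W (j - n) := h1
        _ ≤ E * (∑ m ∈ Finset.range n, T m j) + (T n j * E + (T n j * (k (j - n) / l)) * W (j - n - 1)) := by
            rw [mul_add, ← mul_assoc] at h3
            linarith
        _ = E * (∑ m ∈ Finset.range (n+1), T m j) + T (n+1) j * W (j - ((n+1:ℕ) : ℤ)) := by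
            rw [Finset.sum_range_succ, h4, h5]
            ring
  intro jn hj
  have hclaim := claim N (jn : ℤ)
  have hWN : W ((jn : ℤ) - N) = W (jn : ℤ) := by
    have := hWper ((jn : ℤ) - N)
    rw [show (jn : ℤ) - N + N = (jn : ℤ) from by ring] at this
    exact this.symm
  have hTN : T N (jn : ℤ) = calN N l k := by
    rw [hT]
    simp only
    rw [prod_window hN hper, calN]
  rw [hWN, hTN] at hclaim
  have hM := calM_eq hN hl hper jn hj
  have hN1 : calN N l k < 1 := calN_lt_one hN hl hk
  have hstep2 : W (jn : ℤ) * (1 - calN N l k) ≤ E * calM N l k (jn : ℤ) := by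
    rw [hM]
    nlinarith [hclaim]
  rw [calC, div_mul_eq_mul_div, le_div_iff₀ (by linarith : (0:ℝ) < 1 - calN N l k)]
  nlinarith [hstep2]

lemma le_supIcc01 {h : ℝ → ℝ} (hc : ContinuousOn h (Set.Icc 0 1)) {x : ℝ}
    (hx : x ∈ Set.Icc (0:ℝ) 1) : |h x| ≤ supIcc01 h :=
  le_csSup (isCompact_Icc.bddAbove_image hc.abs) ⟨x, hx, rfl⟩

lemma le_supT {g : ℝ → ℝ} {t : ℝ} (hc : ContinuousOn g (Set.Icc 0 t)) {s : ℝ}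
    (hs : s ∈ Set.Icc (0:ℝ) t) : |g s| ≤ supT g t :=
  le_csSup (isCompact_Icc.bddAbove_image hc.abs) ⟨s, hs, rfl⟩

lemma le_supRect {F : ℝ → ℝ → ℝ} {t : ℝ}
    (hc : ContinuousOn (fun p : ℝ × ℝ => F p.1 p.2) (Set.Icc 0 1 ×ˢ Set.Icc 0 t))
    {x s : ℝ} (hx : x ∈ Set.Icc (0:ℝ) 1) (hs : s ∈ Set.Icc (0:ℝ) t) :
    |F x s| ≤ supRect F t :=
  le_csSup ((isCompact_Icc.prod isCompact_Icc).bddAbove_image hc.abs)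
    ⟨(x, s), ⟨hx, hs⟩, rfl⟩

lemma supIcc01_nonneg (h : ℝ → ℝ) : 0 ≤ supIcc01 h :=
  Real.sSup_nonneg (by rintro y ⟨x, hx, rfl⟩; exact abs_nonneg _)

lemma supT_nonneg (g : ℝ → ℝ) (t : ℝ) : 0 ≤ supT g t :=
  Real.sSup_nonneg (by rintro y ⟨x, hx, rfl⟩; exact abs_nonneg _)

lemma supRect_nonneg (F : ℝ → ℝ → ℝ) (t : ℝ) : 0 ≤ supRect F t :=
  Real.sSup_nonneg (by rintro y ⟨x, hx, rfl⟩; exact abs_nonneg _)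

end Helpers

/-- Theorem 2: robustness of the tracking error system.  Agents are indexed by `ℤ`
with all data and solutions `N`-periodic (indices cyclic modulo `N`). -/
theorem stmt14
    (N : ℕ) (hN : 2 ≤ N)
    (a lam l σ : ℝ) (ha : 0 < a) (hlam : 0 < lam) (hl : 0 < l)
    (hσ : σ ∈ Set.Ioo 0 lam)
    (k : ℤ → ℝ) (hk_per : ∀ i : ℤ, k (i + N) = k i) (hk : ∀ i : ℤ, k i ∈ Set.Ioo 0 l)
    (f : ℤ → ℝ → ℝ → ℝ) (d₀ d₁ : ℤ → ℝ → ℝ) (qt0 ut0 : ℤ → ℝ → ℝ)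
    (hf_per : ∀ i : ℤ, f (i + N) = f i)
    (hd₀_per : ∀ i : ℤ, d₀ (i + N) = d₀ i) (hd₁_per : ∀ i : ℤ, d₁ (i + N) = d₁ i)
    (hqt0_per : ∀ i : ℤ, qt0 (i + N) = qt0 i) (hut0_per : ∀ i : ℤ, ut0 (i + N) = ut0 i)
    (hf : ∀ i : ℤ, ContinuousOn (fun p : ℝ × ℝ => f i p.1 p.2) (Set.Icc 0 1 ×ˢ Set.Ici 0))
    (hd₀ : ∀ i : ℤ, ContinuousOn (d₀ i) (Set.Ici 0))
    (hd₁ : ∀ i : ℤ, ContinuousOn (d₁ i) (Set.Ici 0))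
    (hqt0 : ∀ i : ℤ, ContinuousOn (qt0 i) (Set.Icc 0 1))
    (hut0 : ∀ i : ℤ, ContinuousOn (ut0 i) (Set.Icc 0 1))
    -- observer-error systems q̃⁽ⁱ⁾
    (qt qtx qtxx qtt : ℤ → ℝ → ℝ → ℝ)
    (hqt_per : ∀ i : ℤ, qt (i + N) = qt i)
    (hqt_sol : ∀ i : ℤ, IsParabolicSol a lam (f i) (qt i) (qtx i) (qtxx i) (qtt i))
    (hqt_bc0 : ∀ i : ℤ, ∀ t > (0:ℝ), qtx i 0 t = 0)
    (hqt_bc1 : ∀ i : ℤ, ∀ t > (0:ℝ), qtx i 1 t = -l * qt i 1 t)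
    (hqt_ic : ∀ i : ℤ, ∀ x ∈ Set.Icc (0:ℝ) 1, qt i x 0 = qt0 i x)
    -- tracking-error systems ũ⁽ⁱ⁾
    (ut utx utxx utt : ℤ → ℝ → ℝ → ℝ)
    (hut_per : ∀ i : ℤ, ut (i + N) = ut i)
    (hut_sol : ∀ i : ℤ, IsParabolicSol a lam (f i) (ut i) (utx i) (utxx i) (utt i))
    (hut_bc0 : ∀ i : ℤ, ∀ t > (0:ℝ), ut i 0 t = qt i 0 t + d₀ i t)
    (hut_bc1 : ∀ i : ℤ, ∀ t > (0:ℝ),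
        utx i 1 t = -l * ut i 1 t + k i * ut (i - 1) 1 t + d₁ i t)
    (hut_ic : ∀ i : ℤ, ∀ x ∈ Set.Icc (0:ℝ) 1, ut i x 0 = ut0 i x) :
    ∀ i ∈ Set.Icc (1:ℤ) (N:ℤ), ∀ t > (0:ℝ),
      supIcc01 (fun x => ut i x t) ≤
        calCt N l k i * calD N lam σ l f d₀ d₁ t +
        calCt N l k i * Real.exp (-σ * t) *
          (maxAgents N (fun j => supIcc01 (ut0 j)) +
            maxAgents N (fun j => supIcc01 (qt0 j))) := by

  intro i hi t ht
  obtain ⟨hi1, hi2⟩ := hi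
  have hσ0 : 0 < σ := hσ.1
  have hσl : σ < lam := hσ.2
  have hμ : 0 < lam - σ := by linarith
  have hN1 : 1 ≤ N := by omega
  have hΦpos : (0:ℝ) < Real.exp (σ * t) := Real.exp_pos _
  have hsubR : Set.Icc (0:ℝ) 1 ×ˢ Set.Icc 0 t ⊆ Set.Icc (0:ℝ) 1 ×ˢ Set.Ici 0 :=
    Set.prod_mono subset_rfl Set.Icc_subset_Ici_self
  have hsubT : Set.Icc (0:ℝ) t ⊆ Set.Ici (0:ℝ) := Set.Icc_subset_Ici_self
  -- agent-uniform norms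
  set Fm := maxAgents N (fun j => supRect (f j) t) with hFmdef
  set D0 := maxAgents N (fun j => supT (d₀ j) t) with hD0def
  set D1 := maxAgents N (fun j => supT (d₁ j) t) with hD1def
  set U0 := maxAgents N (fun j => supIcc01 (ut0 j)) with hU0def
  set Q0 := maxAgents N (fun j => supIcc01 (qt0 j)) with hQ0def
  -- pointwise data bounds, for every agent j : ℤ
  have hfb : ∀ j : ℤ, ∀ x ∈ Set.Icc (0:ℝ) 1, ∀ s ∈ Set.Icc (0:ℝ) t, |f j x s| ≤ Fm := by
    intro j x hx s hs
    refine le_trans (le_supRect ((hf j).mono hsubR) hx hs) ?_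
    rw [hFmdef]
    exact le_maxAgents (g := fun jj => supRect (f jj) t) hN1 (fun jj => by simp only [hf_per jj]) j
  have hd0b : ∀ j : ℤ, ∀ s ∈ Set.Icc (0:ℝ) t, |d₀ j s| ≤ D0 := by
    intro j s hs
    refine le_trans (le_supT ((hd₀ j).mono hsubT) hs) ?_
    rw [hD0def]
    exact le_maxAgents (g := fun jj => supT (d₀ jj) t) hN1 (fun jj => by simp only [hd₀_per jj]) j
  have hd1b : ∀ j : ℤ, ∀ s ∈ Set.Icc (0:ℝ) t, |d₁ j s| ≤ D1 := by
    intro j s hs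
    refine le_trans (le_supT ((hd₁ j).mono hsubT) hs) ?_
    rw [hD1def]
    exact le_maxAgents (g := fun jj => supT (d₁ jj) t) hN1 (fun jj => by simp only [hd₁_per jj]) j
  have hq0b : ∀ j : ℤ, ∀ x ∈ Set.Icc (0:ℝ) 1, |qt0 j x| ≤ Q0 := by
    intro j x hx
    refine le_trans (le_supIcc01 (hqt0 j) hx) ?_
    rw [hQ0def]
    exact le_maxAgents (g := fun jj => supIcc01 (qt0 jj)) hN1 (fun jj => by simp only [hqt0_per jj]) j
  have hu0b : ∀ j : ℤ, ∀ x ∈ Set.Icc (0:ℝ) 1, |ut0 j x| ≤ U0 := by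
    intro j x hx
    refine le_trans (le_supIcc01 (hut0 j) hx) ?_
    rw [hU0def]
    exact le_maxAgents (g := fun jj => supIcc01 (ut0 jj)) hN1 (fun jj => by simp only [hut0_per jj]) j
  -- nonnegativity of the norms
  have hFm0 : 0 ≤ Fm := le_trans (supRect_nonneg (f 1) t)
    (by rw [hFmdef]; exact le_maxAgents (g := fun jj => supRect (f jj) t) hN1 (fun jj => by simp only [hf_per jj]) 1)
  have hD00 : 0 ≤ D0 := le_trans (supT_nonneg (d₀ 1) t)
    (by rw [hD0def]; exact le_maxAgents (g := fun jj => supT (d₀ jj) t) hN1 (fun jj => by simp only [hd₀_per jj]) 1)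
  have hD10 : 0 ≤ D1 := le_trans (supT_nonneg (d₁ 1) t)
    (by rw [hD1def]; exact le_maxAgents (g := fun jj => supT (d₁ jj) t) hN1 (fun jj => by simp only [hd₁_per jj]) 1)
  have hU00 : 0 ≤ U0 := le_trans (supIcc01_nonneg (ut0 1))
    (by rw [hU0def]; exact le_maxAgents (g := fun jj => supIcc01 (ut0 jj)) hN1 (fun jj => by simp only [hut0_per jj]) 1)
  have hQ00 : 0 ≤ Q0 := le_trans (supIcc01_nonneg (qt0 1))
    (by rw [hQ0def]; exact le_maxAgents (g := fun jj => supIcc01 (qt0 jj)) hN1 (fun jj => by simp only [hqt0_per jj]) 1)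
  -- convenient nonneg facts
  have hA0 : 0 ≤ Real.exp (σ * t) * Fm / (lam - σ) :=
    div_nonneg (mul_nonneg hΦpos.le hFm0) hμ.le
  have hD00' : 0 ≤ Real.exp (σ * t) * D0 := mul_nonneg hΦpos.le hD00
  have hD10' : 0 ≤ Real.exp (σ * t) * D1 / l := div_nonneg (mul_nonneg hΦpos.le hD10) hl.le
  -- estimate for the observer-error systems
  have hqest : ∀ j : ℤ, ∀ x ∈ Set.Icc (0:ℝ) 1, ∀ s ∈ Set.Icc (0:ℝ) t,
      Real.exp (σ * s) * |qt j x s| ≤ Q0 + Real.exp (σ * t) * Fm / (lam - σ) := by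
    intro j
    apply parabolic_estimate ha hσ0 hσl hl ht (hqt_sol j) _ Fm (hfb j)
    · have h1 : (lam - σ) * (Real.exp (σ * t) * Fm / (lam - σ)) = Real.exp (σ * t) * Fm := by
        field_simp
      have h2 : 0 ≤ (lam - σ) * Q0 := mul_nonneg hμ.le hQ00
      have h3 : (lam - σ) * (Q0 + Real.exp (σ * t) * Fm / (lam - σ)) =
          (lam - σ) * Q0 + (lam - σ) * (Real.exp (σ * t) * Fm / (lam - σ)) := by ring
      linarith [h1, h2, h3]
    · intro x hx
      rw [hqt_ic j x hx]
      linarith [hq0b j x hx, hA0]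
    · intro s hs
      exact Or.inl (hqt_bc0 j s hs.1)
    · intro s hs
      rw [hqt_bc1 j s hs.1,
        show -l * qt j 1 s + l * qt j 1 s = (0:ℝ) from by ring]
      simp only [abs_zero, mul_zero]
      exact mul_nonneg hl.le (by linarith [hQ00, hA0])
  -- the weighted sup of each tracking error
  set W : ℤ → ℝ := fun j => sSup ((fun p : ℝ × ℝ => Real.exp (σ * p.2) * |ut j p.1 p.2|) ''
      (Set.Icc 0 1 ×ˢ Set.Icc 0 t)) with hWdef
  have hWrepr : ∀ j : ℤ, W j = sSup ((fun p : ℝ × ℝ => Real.exp (σ * p.2) * |ut j p.1 p.2|) ''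
      (Set.Icc 0 1 ×ˢ Set.Icc 0 t)) := fun j => by rw [hWdef]
  have hWmem : ∀ j : ℤ, ∀ x ∈ Set.Icc (0:ℝ) 1, ∀ s ∈ Set.Icc (0:ℝ) t,
      Real.exp (σ * s) * |ut j x s| ≤ W j := by
    intro j x hx s hs
    rw [hWrepr j]
    have hcont : ContinuousOn (fun p : ℝ × ℝ => Real.exp (σ * p.2) * |ut j p.1 p.2|)
        (Set.Icc (0:ℝ) 1 ×ˢ Set.Icc (0:ℝ) t) :=
      (Real.continuous_exp.comp (continuous_const.mul continuous_snd)).continuousOn.mul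
        ((hut_sol j).cont_u.mono hsubR).abs
    exact le_csSup ((isCompact_Icc.prod isCompact_Icc).bddAbove_image hcont)
      ⟨(x, s), ⟨hx, hs⟩, rfl⟩
  have hW0 : ∀ j : ℤ, 0 ≤ W j := by
    intro j
    rw [hWrepr j]
    exact Real.sSup_nonneg (by rintro y ⟨p, hp, rfl⟩; positivity)
  have hWper : ∀ j : ℤ, W (j + N) = W j := by
    intro j
    rw [hWrepr (j + N), hWrepr j, hut_per j]
  have hWle : ∀ (j : ℤ) (B : ℝ), 0 ≤ B →
      (∀ x ∈ Set.Icc (0:ℝ) 1, ∀ s ∈ Set.Icc (0:ℝ) t, Real.exp (σ * s) * |ut j x s| ≤ B) →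
      W j ≤ B := by
    intro j B hB h
    rw [hWrepr j]
    apply Real.sSup_le _ hB
    rintro y ⟨⟨x, s⟩, ⟨hx, hs⟩, rfl⟩
    exact h x hx s hs
  clear_value W
  -- the constant E
  set E := U0 + Q0 + 2 * (Real.exp (σ * t) * Fm / (lam - σ)) + Real.exp (σ * t) * D0 +
      Real.exp (σ * t) * D1 / l with hEdef
  have hE0 : 0 ≤ E := by rw [hEdef]; linarith [hU00, hQ00, hA0, hD00', hD10']
  clear_value Fm D0 D1 U0 Q0 E
  -- pointwise bound for the tracking errors
  have ptbound : ∀ j : ℤ, ∀ x ∈ Set.Icc (0:ℝ) 1, ∀ s ∈ Set.Icc (0:ℝ) t,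
      Real.exp (σ * s) * |ut j x s| ≤ E + k j / l * W (j - 1) := by
    intro j
    have hkj := hk j
    have hc0 : 0 ≤ k j / l * W (j - 1) := mul_nonneg (div_nonneg hkj.1.le hl.le) (hW0 _)
    apply parabolic_estimate ha hσ0 hσl hl ht (hut_sol j) _ Fm (hfb j)
    · have h1 : (lam - σ) * (Real.exp (σ * t) * Fm / (lam - σ)) = Real.exp (σ * t) * Fm := by
        field_simp
      have h2 : (lam - σ) * (E + k j / l * W (j - 1)) =
          (lam - σ) * U0 + (lam - σ) * Q0 +
          2 * ((lam - σ) * (Real.exp (σ * t) * Fm / (lam - σ))) +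
          (lam - σ) * (Real.exp (σ * t) * D0) +
          (lam - σ) * (Real.exp (σ * t) * D1 / l) +
          (lam - σ) * (k j / l * W (j - 1)) := by rw [hEdef]; ring
      rw [h1] at h2
      linarith [h2, mul_nonneg hμ.le hU00, mul_nonneg hμ.le hQ00, mul_nonneg hμ.le hD00',
        mul_nonneg hμ.le hD10', mul_nonneg hμ.le hc0, mul_nonneg hΦpos.le hFm0]
    · intro x hx
      rw [hut_ic j x hx]
      have := hu0b j x hx
      rw [hEdef]
      linarith [hA0, hD00', hD10', hQ00, hc0]
    · intro s hs
      right
      have hss : s ∈ Set.Icc (0:ℝ) t := ⟨hs.1.le, hs.2⟩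
      have h1 : Real.exp (σ * s) * |ut j 0 s| ≤
          Real.exp (σ * s) * |qt j 0 s| + Real.exp (σ * s) * |d₀ j s| := by
        rw [hut_bc0 j s hs.1]
        have h := mul_le_mul_of_nonneg_left (abs_add_le (qt j 0 s) (d₀ j s)) (Real.exp_pos (σ * s)).le
        rw [mul_add] at h
        exact h
      have h2 := hqest j 0 ⟨le_refl (0:ℝ), zero_le_one⟩ s hss
      have h3 : Real.exp (σ * s) * |d₀ j s| ≤ Real.exp (σ * t) * D0 :=
        mul_le_mul (Real.exp_le_exp.2 (mul_le_mul_of_nonneg_left hss.2 hσ0.le))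
          (hd0b j s hss) (abs_nonneg _) hΦpos.le
      rw [hEdef]
      linarith [h1, h2, h3, hA0, hU00, hD10', hc0]
    · intro s hs
      have hss : s ∈ Set.Icc (0:ℝ) t := ⟨hs.1.le, hs.2⟩
      have harg : utx j 1 s + l * ut j 1 s = k j * ut (j - 1) 1 s + d₁ j s := by
        rw [hut_bc1 j s hs.1]; ring
      rw [harg]
      have h1 : Real.exp (σ * s) * |k j * ut (j - 1) 1 s + d₁ j s| ≤
          k j * (Real.exp (σ * s) * |ut (j - 1) 1 s|) + Real.exp (σ * s) * |d₁ j s| := by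
        have h := mul_le_mul_of_nonneg_left (abs_add_le (k j * ut (j - 1) 1 s) (d₁ j s))
          (Real.exp_pos (σ * s)).le
        rw [mul_add, abs_mul, abs_of_pos hkj.1] at h
        calc Real.exp (σ * s) * |k j * ut (j - 1) 1 s + d₁ j s| ≤
            Real.exp (σ * s) * (k j * |ut (j - 1) 1 s|) + Real.exp (σ * s) * |d₁ j s| := h
        _ = k j * (Real.exp (σ * s) * |ut (j - 1) 1 s|) + Real.exp (σ * s) * |d₁ j s| := by ring
      have h2 : k j * (Real.exp (σ * s) * |ut (j - 1) 1 s|) ≤ k j * W (j - 1) :=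
        mul_le_mul_of_nonneg_left
          (hWmem (j - 1) 1 ⟨zero_le_one, le_refl (1:ℝ)⟩ s hss) hkj.1.le
      have h3 : Real.exp (σ * s) * |d₁ j s| ≤ Real.exp (σ * t) * D1 :=
        mul_le_mul (Real.exp_le_exp.2 (mul_le_mul_of_nonneg_left hss.2 hσ0.le))
          (hd1b j s hss) (abs_nonneg _) hΦpos.le
      have hC : l * (k j / l * W (j - 1)) = k j * W (j - 1) := by field_simp
      have hB : l * (Real.exp (σ * t) * D1 / l) = Real.exp (σ * t) * D1 := by field_simp
      have h4 : l * (E + k j / l * W (j - 1)) =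
          l * U0 + l * Q0 + 2 * (l * (Real.exp (σ * t) * Fm / (lam - σ))) +
          l * (Real.exp (σ * t) * D0) + l * (Real.exp (σ * t) * D1 / l) +
          l * (k j / l * W (j - 1)) := by rw [hEdef]; ring
      rw [hB, hC] at h4
      linarith [h1, h2, h3, h4, mul_nonneg hl.le hU00, mul_nonneg hl.le hQ00,
        mul_nonneg hl.le hA0, mul_nonneg hl.le hD00']
  -- the cyclic inequality system
  have step : ∀ j : ℤ, W j ≤ E + k j / l * W (j - 1) := by
    intro j
    have hc0 : 0 ≤ k j / l * W (j - 1) := mul_nonneg (div_nonneg (hk j).1.le hl.le) (hW0 _)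
    exact hWle j _ (by linarith [hE0]) (ptbound j)
  have hun := unroll hN1 hl hk_per hk hE0 hW0 hWper step
  -- specialize to agent i
  set jn := (i - 1).toNat with hjn
  have hjn1 : ((jn : ℕ) : ℤ) = i - 1 := by omega
  have hjn2 : jn < N := by omega
  have hWi : W (i - 1) ≤ calC N l k (i - 1) * E := by
    have h := hun jn hjn2
    rw [hjn1] at h
    exact h
  have hMnn : 0 ≤ calM N l k (i - 1) := by
    rw [← hjn1, calM_eq hN1 hl hk_per jn hjn2]
    apply Finset.sum_nonneg
    intro m _
    exact div_nonneg (Finset.prod_nonneg fun r _ => (hk _).1.le) (pow_nonneg hl.le m)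
  have hNlt := calN_lt_one hN1 hl hk
  have hCnn : 0 ≤ calC N l k (i - 1) := div_nonneg hMnn (by linarith)
  have hCt1 : 1 ≤ calCt N l k i := by
    rw [calCt]
    have : 0 ≤ k i / l * calC N l k (i - 1) :=
      mul_nonneg (div_nonneg (hk i).1.le hl.le) hCnn
    linarith
  have hfinal : ∀ x ∈ Set.Icc (0:ℝ) 1, Real.exp (σ * t) * |ut i x t| ≤ calCt N l k i * E := by
    intro x hx
    have h1 := ptbound i x hx t ⟨ht.le, le_refl t⟩
    have h2 : k i / l * W (i - 1) ≤ k i / l * (calC N l k (i - 1) * E) :=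
      mul_le_mul_of_nonneg_left hWi (div_nonneg (hk i).1.le hl.le)
    have h3 : calCt N l k i * E = E + k i / l * (calC N l k (i - 1) * E) := by
      rw [calCt]; ring
    linarith [h1, h2, h3]
  have hcalD0 : 0 ≤ calD N lam σ l f d₀ d₁ t := by
    rw [calD, ← hFmdef, ← hD0def, ← hD1def]
    have ha1 : 0 ≤ 2 / (lam - σ) := by positivity
    have ha2 : 0 ≤ 1 / l := by positivity
    have := mul_nonneg ha1 hFm0
    have := mul_nonneg ha2 hD10
    linarith
  have hED : E = Real.exp (σ * t) * calD N lam σ l f d₀ d₁ t + U0 + Q0 := by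
    rw [hEdef, calD, ← hFmdef, ← hD0def, ← hD1def]
    field_simp
    ring
  -- conclusion
  have hRHS0 : 0 ≤ calCt N l k i * calD N lam σ l f d₀ d₁ t +
      calCt N l k i * Real.exp (-σ * t) * (U0 + Q0) := by
    have hCt0 : (0:ℝ) ≤ calCt N l k i := by linarith
    have he0 : (0:ℝ) ≤ Real.exp (-σ * t) := (Real.exp_pos _).le
    have := add_nonneg (mul_nonneg hCt0 hcalD0)
      (mul_nonneg (mul_nonneg hCt0 he0) (add_nonneg hU00 hQ00))
    exact this
  apply Real.sSup_le _ hRHS0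
  rintro y ⟨x, hx, rfl⟩
  have h1 := hfinal x hx
  have hexp : Real.exp (-σ * t) = (Real.exp (σ * t))⁻¹ := by
    rw [← Real.exp_neg]
    congr 1
    ring
  have hinv : (Real.exp (σ * t))⁻¹ * Real.exp (σ * t) = 1 := inv_mul_cancel₀ hΦpos.ne'
  calc |ut i x t| = (Real.exp (σ * t))⁻¹ * (Real.exp (σ * t) * |ut i x t|) := by
        rw [← mul_assoc, hinv, one_mul]
  _ ≤ (Real.exp (σ * t))⁻¹ * (calCt N l k i * E) :=
      mul_le_mul_of_nonneg_left h1 (inv_nonneg.2 hΦpos.le)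
  _ = calCt N l k i * calD N lam σ l f d₀ d₁ t +
      calCt N l k i * Real.exp (-σ * t) * (U0 + Q0) := by
        rw [hED, hexp]
        field_simp
        ring
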